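/- Let n ≥ 2, let Σ' = {a, b, #}, and let L_Moore be the language accepted by the n-state Moore automaton (viewed as a language of words over the letters a, b). Let L be a language of words over {a,b} with L ≠ {a,b}*, and define L' = { x ++ [#] ++ y | x ∈ {a,b}*, y ∈ L_Moore } ∪ { x ++ [#] ++ y | x ∈ L, y ∈ {a,b}* } over Σ'. Then every complete DFA over Σ' accepting L' has at least 2^n states. -/

import Mathlib

/-- The three-letter alphabet `{a, b, #}` (`hash` denotes `#`). -/
inductive ABH : Type
  | a : ABH
  | b : ABH
  | hash : ABH
deriving DecidableEq

instance instFintypeABH : Fintype ABH :=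
  ⟨{ABH.a, ABH.b, ABH.hash}, fun x => by cases x <;> simp⟩

/-- The `n`-state Moore automaton, viewed over the alphabet `{a,b,#}` (the symbol `#`
labels no transition, so the accepted language consists of words over `{a,b}` only).
States `{1, …, n}` are represented by `Fin n` (`q : Fin n` stands for state `q.val + 1`).
Transitions: `1 —b→ 1`, `1 —a→ 2`, `i —a→ i+1` and `i —b→ i+1` for `2 ≤ i ≤ n-1`, and
`n —a→ 1`, `n —a→ 2`.  Start state `1`, accepting state `n`. -/
def mooreNFA (n : ℕ) : NFA ABH (Fin n) where
  step q x :=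
    { p | (q.val = 0 ∧ x = ABH.b ∧ p.val = 0) ∨
          (q.val = 0 ∧ x = ABH.a ∧ p.val = 1) ∨
          (1 ≤ q.val ∧ q.val + 1 ≤ n - 1 ∧ (x = ABH.a ∨ x = ABH.b) ∧ p.val = q.val + 1) ∨
          (q.val = n - 1 ∧ x = ABH.a ∧ (p.val = 0 ∨ p.val = 1)) }
  start := { q | q.val = 0 }
  accept := { q | q.val = n - 1 }

namespace MooreAux

/-- subset semantics over ℕ -/
def stA (n : ℕ) (S : Finset ℕ) : Finset ℕ :=
  ((S.filter (fun q => q < n-1)).image (· + 1)) ∪ (if n-1 ∈ S then {0, 1} else ∅)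

def stB (n : ℕ) (S : Finset ℕ) : Finset ℕ :=
  ((S.filter (fun q => 1 ≤ q ∧ q < n-1)).image (· + 1)) ∪ (if 0 ∈ S then {0} else ∅)

def stC (n : ℕ) : ABH → Finset ℕ → Finset ℕ
  | ABH.a, S => stA n S
  | ABH.b, S => stB n S
  | ABH.hash, _ => ∅

def ev (n : ℕ) (S : Finset ℕ) (w : List ABH) : Finset ℕ := w.foldl (fun S c => stC n c S) S

@[simp] lemma ev_nil (n : ℕ) (S : Finset ℕ) : ev n S [] = S := rfl

@[simp] lemma ev_cons (n : ℕ) (S : Finset ℕ) (c : ABH) (w : List ABH) :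
    ev n S (c :: w) = ev n (stC n c S) w := rfl

lemma ev_append (n : ℕ) (S : Finset ℕ) (u v : List ABH) :
    ev n S (u ++ v) = ev n (ev n S u) v := List.foldl_append ..

lemma mem_stA {n : ℕ} {S : Finset ℕ} {p : ℕ} :
    p ∈ stA n S ↔ (∃ q, (q ∈ S ∧ q < n-1) ∧ q+1 = p) ∨ (n-1 ∈ S ∧ (p = 0 ∨ p = 1)) := by
  constructor
  · intro hp
    rcases Finset.mem_union.1 hp with h | h
    · obtain ⟨q, hq, rfl⟩ := Finset.mem_image.1 h
      exact Or.inl ⟨q, Finset.mem_filter.1 hq, rfl⟩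
    · by_cases hl : n - 1 ∈ S
      · rw [if_pos hl] at h
        refine Or.inr ⟨hl, ?_⟩
        simpa using h
      · simp [if_neg hl] at h
  · rintro (⟨q, hq, rfl⟩ | ⟨hl, hp⟩)
    · exact Finset.mem_union_left _ (Finset.mem_image.2 ⟨q, Finset.mem_filter.2 hq, rfl⟩)
    · refine Finset.mem_union_right _ ?_
      rw [if_pos hl]
      simpa using hp

lemma mem_stB {n : ℕ} {S : Finset ℕ} {p : ℕ} :
    p ∈ stB n S ↔ (∃ q, (q ∈ S ∧ 1 ≤ q ∧ q < n-1) ∧ q+1 = p) ∨ (0 ∈ S ∧ p = 0) := by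
  by_cases h : (0:ℕ) ∈ S
  · simp [stB, h, Finset.mem_union, Finset.mem_image, Finset.mem_filter]
    exact or_comm
  · simp [stB, h, Finset.mem_union, Finset.mem_image, Finset.mem_filter] <;> tauto

lemma stA_lt {n : ℕ} (hn : 2 ≤ n) {S : Finset ℕ} {p : ℕ} (hp : p ∈ stA n S) : p < n := by
  rcases mem_stA.1 hp with ⟨q, ⟨_, hq⟩, rfl⟩ | ⟨_, h⟩ <;> omega

lemma stB_lt {n : ℕ} (hn : 2 ≤ n) {S : Finset ℕ} {p : ℕ} (hp : p ∈ stB n S) : p < n := by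
  rcases mem_stB.1 hp with ⟨q, ⟨_, _, hq⟩, rfl⟩ | ⟨_, h⟩ <;> omega

lemma stC_lt {n : ℕ} (hn : 2 ≤ n) {c : ABH} {S : Finset ℕ} {p : ℕ} (hp : p ∈ stC n c S) :
    p < n := by
  cases c with
  | a => exact stA_lt hn hp
  | b => exact stB_lt hn hp
  | hash => simp [stC] at hp

lemma ev_lt {n : ℕ} (hn : 2 ≤ n) {S : Finset ℕ} (hS : ∀ q ∈ S, q < n) (w : List ABH) :
    ∀ p ∈ ev n S w, p < n := by
  induction w generalizing S with
  | nil => simpa using hS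
  | cons c w ih => exact ih (fun q hq => stC_lt hn hq)

end MooreAux
namespace MooreAux

def wa (k : ℕ) : List ABH := List.replicate k ABH.a
def wb (k : ℕ) : List ABH := List.replicate k ABH.b

lemma wa_nohash (k : ℕ) : ∀ c ∈ wa k, c ≠ ABH.hash := by
  intro c hc
  rw [List.eq_of_mem_replicate (show c ∈ List.replicate k ABH.a from hc)]
  simp

lemma wb_nohash (k : ℕ) : ∀ c ∈ wb k, c ≠ ABH.hash := by
  intro c hc
  rw [List.eq_of_mem_replicate (show c ∈ List.replicate k ABH.b from hc)]
  simp

@[simp] lemma wb_succ (k : ℕ) : wb (k+1) = ABH.b :: wb k := rfl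
@[simp] lemma wa_succ (k : ℕ) : wa (k+1) = ABH.a :: wa k := rfl
lemma wa_succ' (k : ℕ) : wa (k+1) = wa k ++ [ABH.a] := by
  simp [wa, List.replicate_succ']

lemma zero_mem_ev_wb {n : ℕ} (S : Finset ℕ) (j : ℕ) : 0 ∈ ev n S (wb j) ↔ 0 ∈ S := by
  induction j generalizing S with
  | zero => simp [wb]
  | succ j ih =>
    rw [wb_succ, ev_cons, ih]
    simp only [stC, mem_stB]
    constructor
    · rintro (⟨q, _, h⟩ | ⟨h, _⟩) <;> first | omega | exact h
    · intro h; exact Or.inr ⟨h, by trivial⟩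

lemma last_mem_ev_wb {n : ℕ} (hn : 2 ≤ n) (S : Finset ℕ) (j : ℕ) :
    n-1 ∈ ev n S (wb j) ↔ ∃ q ∈ S, 1 ≤ q ∧ q + j = n-1 := by
  induction j generalizing S with
  | zero =>
    simp only [wb, List.replicate_zero, ev_nil]
    constructor
    · intro h; exact ⟨n-1, h, by omega, by omega⟩
    · rintro ⟨q, hq, _, h⟩
      have : q = n - 1 := by omega
      rwa [← this]
  | succ j ih =>
    rw [wb_succ, ev_cons, ih]
    simp only [stC, mem_stB]
    constructor
    · rintro ⟨q', hq', h1, h2⟩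
      rcases hq' with ⟨q, ⟨hq, hq1, hq2⟩, rfl⟩ | ⟨_, rfl⟩
      · exact ⟨q, hq, hq1, by omega⟩
      · omega
    · rintro ⟨q, hq, hq1, hq2⟩
      refine ⟨q + 1, Or.inl ⟨q, ⟨hq, hq1, by omega⟩, rfl⟩, by omega, by omega⟩

/-- distinguishing word for state i -/
def distw (n i : ℕ) : List ABH :=
  if i = 0 then wb (n-1) ++ [ABH.a] ++ wb (n-2) else wb (n-1-i)

lemma distw_nohash (n i : ℕ) : ∀ c ∈ distw n i, c ≠ ABH.hash := by
  intro c hc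
  unfold distw at hc
  split at hc
  · simp only [List.mem_append, List.mem_singleton] at hc
    rcases hc with (hc | hc) | hc
    · exact wb_nohash _ c hc
    · rw [hc]; simp
    · exact wb_nohash _ c hc
  · exact wb_nohash _ c hc

lemma mem_ev_distw {n : ℕ} (hn : 2 ≤ n) (S : Finset ℕ) {i : ℕ} (hi : i < n) :
    n-1 ∈ ev n S (distw n i) ↔ i ∈ S := by
  unfold distw
  by_cases h0 : i = 0
  · rw [if_pos h0, ev_append, ev_append, h0]
    have h1 : n - 1 ∈ ev n (ev n (ev n S (wb (n-1))) [ABH.a]) (wb (n-2)) ↔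
        1 ∈ ev n (ev n S (wb (n-1))) [ABH.a] := by
      rw [last_mem_ev_wb hn]
      constructor
      · rintro ⟨q, hq, h1, h2⟩
        have hq1 : q = 1 := by omega
        subst hq1; exact hq
      · intro h; exact ⟨1, h, le_refl _, by omega⟩
    rw [h1]
    have h2 : ¬ (n - 1 ∈ ev n S (wb (n-1))) := by
      rw [last_mem_ev_wb hn]
      rintro ⟨q, _, _, _⟩; omega
    show 1 ∈ stA n (ev n S (wb (n-1))) ↔ _
    rw [mem_stA]
    constructor
    · rintro (⟨q, ⟨hq, hq1⟩, hq2⟩ | ⟨h, _⟩)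
      · have : q = 0 := by omega
        rw [this] at hq; rwa [zero_mem_ev_wb] at hq
      · exact absurd h h2
    · intro h
      exact Or.inl ⟨0, ⟨(zero_mem_ev_wb S _).2 h, by omega⟩, rfl⟩
  · rw [if_neg h0, last_mem_ev_wb hn]
    constructor
    · rintro ⟨q, hq, h1, h2⟩
      have : q = i := by omega
      rwa [← this]
    · intro h; exact ⟨i, h, by omega, by omega⟩

end MooreAux
namespace MooreAux

lemma ev_wa_shift {n : ℕ} : ∀ (k : ℕ) (S : Finset ℕ), (∀ q ∈ S, q + k ≤ n-1) →
    ev n S (wa k) = S.image (· + k) := by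
  intro k
  induction k with
  | zero => intro S _; simp [wa]
  | succ k ih =>
    intro S hS
    rw [wa_succ, ev_cons]
    have hA : stC n ABH.a S = S.image (· + 1) := by
      ext p
      simp only [stC, mem_stA, Finset.mem_image]
      constructor
      · rintro (⟨q, ⟨hq, _⟩, rfl⟩ | ⟨h, _⟩)
        · exact ⟨q, hq, rfl⟩
        · exact absurd (hS _ h) (by omega)
      · rintro ⟨q, hq, rfl⟩
        exact Or.inl ⟨q, ⟨hq, by have := hS q hq; omega⟩, rfl⟩
    rw [hA, ih]
    · rw [Finset.image_image]
      apply Finset.image_congr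
      intro q _
      simp; omega
    · intro q hq
      obtain ⟨q', hq', rfl⟩ := Finset.mem_image.1 hq
      have := hS q' hq'; omega

lemma ev_wa_single {n : ℕ} (hn : 2 ≤ n) {k : ℕ} (hk : k ≤ n-1) :
    ev n {0} (wa k) = {k} := by
  rw [ev_wa_shift k {0} (by intro q hq; simp at hq; omega)]
  simp

lemma reach_empty {n : ℕ} (hn : 2 ≤ n) :
    ∃ u : List ABH, (∀ c ∈ u, c ≠ ABH.hash) ∧ ev n {0} u = ∅ := by
  refine ⟨wa (n-1) ++ [ABH.b], ?_, ?_⟩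
  · intro c hc
    rcases List.mem_append.1 hc with h | h
    · exact wa_nohash _ c h
    · rw [List.mem_singleton.1 h]; simp
  · rw [ev_append, ev_wa_single hn (le_refl _)]
    show stB n {n-1} = ∅
    ext p
    simp only [mem_stB, Finset.mem_singleton, Finset.notMem_empty, iff_false]
    rintro (⟨q, ⟨rfl, _, _⟩, _⟩ | ⟨h, _⟩) <;> omega

lemma sum_lt_sq {n : ℕ} (hn : 2 ≤ n) {T : Finset ℕ} (hT : ∀ q ∈ T, q < n) :
    ∑ q ∈ T, q < n^2 := by
  have hsub : T ⊆ Finset.range n := fun q hq => Finset.mem_range.2 (hT q hq)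
  have h1 : ∑ q ∈ T, q ≤ T.card • (n-1) :=
    Finset.sum_le_card_nsmul T _ (n-1) (fun q hq => by have := hT q hq; omega)
  have h2 : T.card ≤ n := by
    have := Finset.card_le_card hsub
    simpa using this
  have : T.card • (n-1) ≤ n * (n-1) := by
    rw [smul_eq_mul]
    exact Nat.mul_le_mul_right _ h2
  have : ∑ q ∈ T, q ≤ n * (n-1) := le_trans h1 this
  have hnn : n * (n-1) < n^2 := by
    have h : n - 1 + 1 = n := by omega
    calc n * (n-1) < n * (n-1) + n := by omega
      _ = n * (n-1+1) := by ring
      _ = n ^ 2 := by rw [h, pow_two]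
  omega

lemma reach_main {n : ℕ} (hn : 2 ≤ n) :
    ∀ (N : ℕ) (S : Finset ℕ), (∀ q ∈ S, q < n) → S.card * n^2 + ∑ q ∈ S, q ≤ N →
    ∃ u : List ABH, (∀ c ∈ u, c ≠ ABH.hash) ∧ ev n {0} u = S := by
  intro N
  induction N with
  | zero =>
    intro S hS hμ
    have hcard : S.card = 0 := by
      have h' : S.card * n^2 = 0 := by omega
      rcases Nat.mul_eq_zero.1 h' with h | h
      · exact h
      · have : 0 < n^2 := Nat.pow_pos (show 0 < n by omega)
        omega
    rw [Finset.card_eq_zero.1 hcard]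
    exact reach_empty hn
  | succ N ih =>
    intro S hS hμ
    by_cases hemp : S = ∅
    · rw [hemp]; exact reach_empty hn
    have hne : S.Nonempty := Finset.nonempty_iff_ne_empty.2 hemp
    by_cases h0 : 0 ∈ S
    · by_cases hcard1 : S.card = 1
      · -- S = {0}
        obtain ⟨x, hx⟩ := Finset.card_eq_one.1 hcard1
        have : S = {0} := by rw [hx] at h0 ⊢; simp at h0; rw [h0]
        exact ⟨[], by simp, by rw [this]; rfl⟩
      · have hcard2 : 2 ≤ S.card := by
          have : 1 ≤ S.card := Finset.card_pos.2 hne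
          omega
        by_cases h1 : 1 ∈ S
        · -- case 0,1 ∈ S : T = ((S.erase 0).erase 1).image (·-1) ∪ {n-1}
          set T : Finset ℕ := (((S.erase 0).erase 1).image (· - 1)) ∪ {n-1} with hTdef
          have hTlt : ∀ q ∈ T, q < n := by
            intro q hq
            rcases Finset.mem_union.1 hq with h | h
            · obtain ⟨q', hq', rfl⟩ := Finset.mem_image.1 h
              have := hS q' (Finset.mem_of_mem_erase (Finset.mem_of_mem_erase hq'))
              omega
            · rw [Finset.mem_singleton.1 h]; omega
          have hTcard : T.card ≤ S.card - 1 := by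
            have h3 : ((S.erase 0).erase 1).card = S.card - 2 := by
              rw [Finset.card_erase_of_mem (Finset.mem_erase.2 ⟨by omega, h1⟩),
                Finset.card_erase_of_mem h0]
              omega
            calc T.card ≤ (((S.erase 0).erase 1).image (· - 1)).card + 1 := by
                  apply le_trans (Finset.card_union_le _ _); simp
              _ ≤ (S.card - 2) + 1 := by
                  have := Finset.card_image_le (s := (S.erase 0).erase 1) (f := (· - 1))
                  omega
              _ ≤ S.card - 1 := by omega
          have hμT : T.card * n^2 + ∑ q ∈ T, q ≤ N := by
            have hs := sum_lt_sq hn hTlt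
            have : T.card * n^2 ≤ (S.card - 1) * n^2 := Nat.mul_le_mul_right _ hTcard
            have hc1 : S.card - 1 + 1 = S.card := by omega
            have hco : (S.card - 1) * n^2 + n^2 = S.card * n^2 := by
              calc (S.card - 1) * n^2 + n^2 = (S.card - 1 + 1) * n^2 := by ring
                _ = S.card * n^2 := by rw [hc1]
            omega
          obtain ⟨u, hu, hev⟩ := ih T hTlt hμT
          refine ⟨u ++ [ABH.a], ?_, ?_⟩
          · intro c hc
            rcases List.mem_append.1 hc with h | h
            · exact hu c h
            · rw [List.mem_singleton.1 h]; simp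
          · rw [ev_append, hev]
            show stA n T = S
            ext p
            rw [mem_stA]
            have hmemT : ∀ p : ℕ, p ∈ T ↔ ((p + 1 ∈ S ∧ 2 ≤ p + 1) ∨ p = n - 1) := by
              intro p
              rw [hTdef]
              simp only [Finset.mem_union, Finset.mem_image, Finset.mem_erase,
                Finset.mem_singleton]
              constructor
              · rintro (⟨q, ⟨hq1, hq0, hq⟩, rfl⟩ | h)
                · left
                  have : q - 1 + 1 = q := by omega
                  rw [this]
                  exact ⟨hq, by omega⟩
                · right; exact h
              · rintro (⟨hp, hp2⟩ | rfl)
                · left; exact ⟨p + 1, ⟨by omega, by omega, hp⟩, by omega⟩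
                · right; rfl
            constructor
            · rintro (⟨q, ⟨hq, hqlt⟩, rfl⟩ | ⟨_, hp⟩)
              · rcases (hmemT q).1 hq with ⟨h, _⟩ | rfl
                · exact h
                · omega
              · rcases hp with rfl | rfl <;> assumption
            · intro hp
              by_cases hp01 : p = 0 ∨ p = 1
              · exact Or.inr ⟨(hmemT (n-1)).2 (Or.inr rfl), hp01⟩
              · push_neg at hp01
                refine Or.inl ⟨p - 1, ⟨(hmemT (p-1)).2 (Or.inl (by
                    have h : p - 1 + 1 = p := by omega
                    rw [h]; exact ⟨hp, by omega⟩)), ?_⟩, by omega⟩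
                have := hS p hp
                omega
        · -- case 0 ∈ S, 1 ∉ S, card ≥ 2 : T = insert 0 ((S.erase 0).image (·-1))
          set T : Finset ℕ := insert 0 ((S.erase 0).image (· - 1)) with hTdef
          have hSe2 : ∀ q ∈ S.erase 0, 2 ≤ q := by
            intro q hq
            obtain ⟨hq0, hqS⟩ := Finset.mem_erase.1 hq
            rcases Nat.lt_or_ge q 2 with h | h
            · interval_cases q
              · omega
              · exact absurd hqS h1
            · exact h
          have hTlt : ∀ q ∈ T, q < n := by
            intro q hq
            rcases Finset.mem_insert.1 hq with rfl | h
            · omega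
            · obtain ⟨q', hq', rfl⟩ := Finset.mem_image.1 h
              have := hS q' (Finset.mem_of_mem_erase hq')
              omega
          have hTcard : T.card ≤ S.card := by
            calc T.card ≤ ((S.erase 0).image (· - 1)).card + 1 := Finset.card_insert_le _ _
              _ ≤ (S.erase 0).card + 1 := by
                  have := Finset.card_image_le (s := S.erase 0) (f := (· - 1))
                  omega
              _ = S.card := by rw [Finset.card_erase_of_mem h0]; omega
          have hEne : (S.erase 0).Nonempty := by
            rw [← Finset.card_pos, Finset.card_erase_of_mem h0]
            omega
          have hsumT : ∑ q ∈ T, q < ∑ q ∈ S, q := by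
            have hinj : Set.InjOn (· - 1) (S.erase 0) := by
              intro x hx y hy hxy
              have := hSe2 x hx; have := hSe2 y hy
              simp only at hxy; omega
            have h1' : ∑ q ∈ T, q ≤ ∑ q ∈ (S.erase 0).image (· - 1), q := by
              rw [hTdef]
              by_cases hmem : 0 ∈ (S.erase 0).image (· - 1)
              · rw [Finset.insert_eq_self.2 hmem]
              · rw [Finset.sum_insert hmem]
                omega
            have h2' : ∑ q ∈ (S.erase 0).image (· - 1), q = ∑ q ∈ S.erase 0, (q - 1) :=
              Finset.sum_image (fun x hx y hy => hinj hx hy)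
            have h3' : ∑ q ∈ S.erase 0, (q - 1) < ∑ q ∈ S.erase 0, q := by
              apply Finset.sum_lt_sum (fun q _ => Nat.sub_le q 1)
              obtain ⟨q, hq⟩ := hEne
              exact ⟨q, hq, by have := hSe2 q hq; omega⟩
            have h4' : ∑ q ∈ S.erase 0, q = ∑ q ∈ S, q := by
              rw [Finset.sum_erase _ (by rfl)]
            omega
          have hμT : T.card * n^2 + ∑ q ∈ T, q ≤ N := by
            have : T.card * n^2 ≤ S.card * n^2 := Nat.mul_le_mul_right _ hTcard
            omega
          obtain ⟨u, hu, hev⟩ := ih T hTlt hμT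
          refine ⟨u ++ [ABH.b], ?_, ?_⟩
          · intro c hc
            rcases List.mem_append.1 hc with h | h
            · exact hu c h
            · rw [List.mem_singleton.1 h]; simp
          · rw [ev_append, hev]
            show stB n T = S
            ext p
            rw [mem_stB]
            have hmemT : ∀ p : ℕ, p ∈ T ↔ (p = 0 ∨ (p + 1 ∈ S ∧ 1 ≤ p)) := by
              intro p
              rw [hTdef]
              simp only [Finset.mem_insert, Finset.mem_image, Finset.mem_erase]
              constructor
              · rintro (rfl | ⟨q, ⟨hq0, hq⟩, rfl⟩)
                · left; rfl
                · right
                  have h2q := hSe2 q (Finset.mem_erase.2 ⟨hq0, hq⟩)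
                  constructor
                  · have : q - 1 + 1 = q := by omega
                    rw [this]; exact hq
                  · omega
              · rintro (rfl | ⟨hp, hp1⟩)
                · left; rfl
                · right; exact ⟨p + 1, ⟨by omega, hp⟩, by omega⟩
            constructor
            · rintro (⟨q, ⟨hq, hq1, hqlt⟩, rfl⟩ | ⟨_, rfl⟩)
              · rcases (hmemT q).1 hq with rfl | ⟨h, _⟩
                · omega
                · exact h
              · exact h0
            · intro hp
              by_cases hp0 : p = 0
              · exact Or.inr ⟨(hmemT 0).2 (Or.inl rfl), hp0⟩
              · have hp2 : 2 ≤ p := hSe2 p (Finset.mem_erase.2 ⟨hp0, hp⟩)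
                have hpn := hS p hp
                refine Or.inl ⟨p - 1, ⟨(hmemT (p-1)).2 (Or.inr ⟨by
                    have : p - 1 + 1 = p := by omega
                    rw [this]; exact hp, by omega⟩), by omega, by omega⟩, by omega⟩
    · -- 0 ∉ S : shift down by m = min
      set m := S.min' hne with hm
      have hmS : m ∈ S := S.min'_mem hne
      have hm1 : 1 ≤ m := by
        rcases Nat.eq_zero_or_pos m with h | h
        · rw [h] at hmS; exact absurd hmS h0
        · exact h
      have hmle : ∀ q ∈ S, m ≤ q := fun q hq => S.min'_le q hq
      set T : Finset ℕ := S.image (· - m) with hTdef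
      have hTlt : ∀ q ∈ T, q < n := by
        intro q hq
        obtain ⟨q', hq', rfl⟩ := Finset.mem_image.1 hq
        have := hS q' hq'; omega
      have hinj : Set.InjOn (· - m) (S : Set ℕ) := by
        intro x hx y hy hxy
        have := hmle x hx; have := hmle y hy
        simp only at hxy; omega
      have hTcard : T.card = S.card := Finset.card_image_of_injOn hinj
      have hsumT : ∑ q ∈ T, q < ∑ q ∈ S, q := by
        rw [hTdef, Finset.sum_image (fun x hx y hy => hinj hx hy)]
        apply Finset.sum_lt_sum (fun q _ => Nat.sub_le q m)
        exact ⟨m, hmS, by omega⟩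
      have hμT : T.card * n^2 + ∑ q ∈ T, q ≤ N := by
        rw [hTcard]; omega
      obtain ⟨u, hu, hev⟩ := ih T hTlt hμT
      refine ⟨u ++ wa m, ?_, ?_⟩
      · intro c hc
        rcases List.mem_append.1 hc with h | h
        · exact hu c h
        · exact wa_nohash _ c h
      · rw [ev_append, hev, ev_wa_shift m T (by
          intro q hq
          obtain ⟨q', hq', rfl⟩ := Finset.mem_image.1 hq
          have h1 := hS q' hq'; have h2 := hmle q' hq'
          omega)]
        ext p
        simp only [hTdef, Finset.image_image, Finset.mem_image, Function.comp]
        constructor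
        · rintro ⟨q, hq, rfl⟩
          have := hmle q hq
          simpa [Nat.sub_add_cancel this] using hq
        · intro hp
          exact ⟨p, hp, by have := hmle p hp; omega⟩

end MooreAux
namespace MooreAux

def toSet (n : ℕ) (S : Finset ℕ) : Set (Fin n) := { q | (q : ℕ) ∈ S }

lemma mem_toSet {n : ℕ} {S : Finset ℕ} {q : Fin n} : q ∈ toSet n S ↔ (q : ℕ) ∈ S :=
  Iff.rfl

lemma step_hash {n : ℕ} (q : Fin n) : (mooreNFA n).step q ABH.hash = ∅ := by
  ext p
  simp only [mooreNFA, Set.mem_setOf_eq, Set.mem_empty_iff_false, iff_false]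
  rintro (⟨_, h, _⟩ | ⟨_, h, _⟩ | ⟨_, _, h, _⟩ | ⟨_, h, _⟩) <;>
    first
    | exact absurd h (by simp)
    | (rcases h with h | h <;> exact absurd h (by simp))

lemma stepSet_toSet {n : ℕ} (hn : 2 ≤ n) (S : Finset ℕ) (hS : ∀ q ∈ S, q < n) (c : ABH) :
    (mooreNFA n).stepSet (toSet n S) c = toSet n (stC n c S) := by
  ext p
  rw [NFA.mem_stepSet]
  cases c with
  | hash =>
    simp only [stC, mem_toSet, Finset.notMem_empty, iff_false]
    rintro ⟨q, _, hq⟩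
    rw [step_hash] at hq
    exact hq
  | a =>
    constructor
    · rintro ⟨q, hqS, hstep⟩
      rw [mem_toSet] at hqS
      simp only [mooreNFA, Set.mem_setOf_eq] at hstep
      rw [mem_toSet, stC, mem_stA]
      rcases hstep with ⟨_, h, _⟩ | ⟨hq0, _, hp⟩ | ⟨hq1, hq2, _, hp⟩ | ⟨hqn, _, hp⟩
      · exact absurd h (by simp)
      · exact Or.inl ⟨0, ⟨by rwa [hq0] at hqS, by omega⟩, by omega⟩
      · exact Or.inl ⟨(q : ℕ), ⟨hqS, by omega⟩, by omega⟩
      · exact Or.inr ⟨by rwa [hqn] at hqS, by omega⟩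
    · intro hp
      rw [mem_toSet, stC, mem_stA] at hp
      rcases hp with ⟨q, ⟨hq, hqlt⟩, hpq⟩ | ⟨hmem, hp01⟩
      · refine ⟨⟨q, by omega⟩, hq, ?_⟩
        simp only [mooreNFA, Set.mem_setOf_eq, reduceCtorEq, false_and, true_and, and_true,
          false_or, or_false, and_false]
        omega
      · refine ⟨⟨n-1, by omega⟩, hmem, ?_⟩
        simp only [mooreNFA, Set.mem_setOf_eq, reduceCtorEq, false_and, true_and, and_true,
          false_or, or_false, and_false]
        omega
  | b =>
    constructor
    · rintro ⟨q, hqS, hstep⟩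
      rw [mem_toSet] at hqS
      simp only [mooreNFA, Set.mem_setOf_eq] at hstep
      rw [mem_toSet, stC, mem_stB]
      rcases hstep with ⟨hq0, _, hp⟩ | ⟨_, h, _⟩ | ⟨hq1, hq2, _, hp⟩ | ⟨_, h, _⟩
      · exact Or.inr ⟨by rwa [hq0] at hqS, by omega⟩
      · exact absurd h (by simp)
      · exact Or.inl ⟨(q : ℕ), ⟨hqS, by omega, by omega⟩, by omega⟩
      · exact absurd h (by simp)
    · intro hp
      rw [mem_toSet, stC, mem_stB] at hp
      rcases hp with ⟨q, ⟨hq, hq1, hqlt⟩, hpq⟩ | ⟨hmem, hp0⟩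
      · refine ⟨⟨q, by omega⟩, hq, ?_⟩
        simp only [mooreNFA, Set.mem_setOf_eq, reduceCtorEq, false_and, true_and, and_true,
          false_or, or_false, and_false]
        omega
      · refine ⟨⟨0, by omega⟩, hmem, ?_⟩
        simp only [mooreNFA, Set.mem_setOf_eq, reduceCtorEq, false_and, true_and, and_true,
          false_or, or_false, and_false]
        omega

lemma evalFrom_toSet {n : ℕ} (hn : 2 ≤ n) (S : Finset ℕ) (hS : ∀ q ∈ S, q < n) :
    ∀ w : List ABH, (mooreNFA n).evalFrom (toSet n S) w = toSet n (ev n S w) := by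
  intro w
  induction w generalizing S with
  | nil => rfl
  | cons c w ih =>
    show (mooreNFA n).evalFrom ((mooreNFA n).stepSet (toSet n S) c) w = _
    rw [stepSet_toSet hn S hS c, ih _ (fun q hq => stC_lt hn hq)]
    rfl

lemma start_toSet {n : ℕ} (hn : 2 ≤ n) : (mooreNFA n).start = toSet n {0} := by
  ext q
  simp [mooreNFA, toSet]

lemma accepts_iff {n : ℕ} (hn : 2 ≤ n) (S : Finset ℕ) (hS : ∀ q ∈ S, q < n) (w : List ABH) :
    ((mooreNFA n).evalFrom (toSet n S) w ∩ (mooreNFA n).accept).Nonempty ↔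
      n - 1 ∈ ev n S w := by
  rw [evalFrom_toSet hn S hS w]
  constructor
  · rintro ⟨q, hq1, hq2⟩
    have : (q : ℕ) = n - 1 := hq2
    rw [← this]
    exact hq1
  · intro h
    exact ⟨⟨n-1, by omega⟩, h, rfl⟩

lemma mem_accepts_iff {n : ℕ} (hn : 2 ≤ n) (w : List ABH) :
    w ∈ (mooreNFA n).accepts ↔ n - 1 ∈ ev n {0} w := by
  rw [NFA.mem_accepts]
  have h0 : ∀ q ∈ ({0} : Finset ℕ), q < n := by intro q hq; simp at hq; omega
  constructor
  · rintro ⟨q, hq1, hq2⟩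
    have := (accepts_iff hn {0} h0 w).1 ⟨q, by rwa [start_toSet hn] at hq2, hq1⟩
    exact this
  · intro h
    obtain ⟨q, hq1, hq2⟩ := (accepts_iff hn {0} h0 w).2 h
    exact ⟨q, hq2, by rwa [start_toSet hn]⟩

lemma accepts_nohash {n : ℕ} (hn : 2 ≤ n) (w : List ABH) (hw : w ∈ (mooreNFA n).accepts) :
    ∀ c ∈ w, c ≠ ABH.hash := by
  intro c hc
  rintro rfl
  rw [mem_accepts_iff hn] at hw
  obtain ⟨u, v, rfl⟩ := List.append_of_mem hc
  rw [show u ++ ABH.hash :: v = (u ++ [ABH.hash]) ++ v by simp, ev_append, ev_append] at hw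
  have h1 : ev n (ev n {0} u) [ABH.hash] = ∅ := rfl
  rw [h1] at hw
  have h2 : ∀ v' : List ABH, ev n ∅ v' = ∅ := by
    intro v'
    induction v' with
    | nil => rfl
    | cons c v' ih =>
      rw [ev_cons]
      have : stC n c ∅ = ∅ := by
        cases c <;> simp [stC, stA, stB]
      rw [this, ih]
  rw [h2] at hw
  simp at hw

lemma hash_split {x x' y y' : List ABH} (hx : ∀ c ∈ x, c ≠ ABH.hash)
    (hx' : ∀ c ∈ x', c ≠ ABH.hash)
    (h : x ++ ABH.hash :: y = x' ++ ABH.hash :: y') : x = x' ∧ y = y' := by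
  induction x generalizing x' with
  | nil =>
    cases x' with
    | nil => simpa using h
    | cons c x' =>
      simp only [List.nil_append, List.cons_append, List.cons.injEq] at h
      exact absurd h.1.symm (hx' c (by simp))
  | cons c x ih =>
    cases x' with
    | nil =>
      simp only [List.nil_append, List.cons_append, List.cons.injEq] at h
      exact absurd h.1 (hx c (by simp))
    | cons c' x' =>
      simp only [List.cons_append, List.cons.injEq] at h
      obtain ⟨rfl, h2⟩ := h
      obtain ⟨h3, h4⟩ := ih (fun d hd => hx d (by simp [hd])) (fun d hd => hx' d (by simp [hd])) h2
      exact ⟨by rw [h3], h4⟩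

end MooreAux


open MooreAux

/-- let `L_Moore` be the language of the `n`-state Moore automaton
(`n ≥ 2`) and let `L` be a language of words over `{a,b}` (no `#`) with
`L ≠ {a,b}*`.  Then every complete DFA over `{a,b,#}` accepting
`L' = {a,b}* # L_Moore ∪ L # {a,b}*` has at least `2^n` states. -/
theorem union_language_state_complexity_blowup
    (n : ℕ) (hn : 2 ≤ n) (L : Language ABH)
    (hL : ∀ w ∈ L, ∀ c ∈ w, c ≠ ABH.hash)
    (hLne : L ≠ { w : List ABH | ∀ c ∈ w, c ≠ ABH.hash }) :
    ∀ (Q : Type) [Fintype Q] (D : DFA ABH Q),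
      D.accepts =
        ({ w | ∃ x y : List ABH, (∀ c ∈ x, c ≠ ABH.hash) ∧
              y ∈ (mooreNFA n).accepts ∧ w = x ++ [ABH.hash] ++ y } ∪
         { w | ∃ x y : List ABH, x ∈ L ∧ (∀ c ∈ y, c ≠ ABH.hash) ∧
              w = x ++ [ABH.hash] ++ y }) →
      2 ^ n ≤ Fintype.card Q := by
  intro Q _ D hD
  -- a hash-free word not in L
  obtain ⟨x₀, hx₀hf, hx₀L⟩ : ∃ x₀ : List ABH, (∀ c ∈ x₀, c ≠ ABH.hash) ∧ x₀ ∉ L := by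
    by_contra hc
    push_neg at hc
    exact hLne (Set.eq_of_subset_of_subset (fun w hw => hL w hw) (fun w hw => hc w hw))
  -- key characterization
  have key : ∀ y : List ABH, (∀ c ∈ y, c ≠ ABH.hash) →
      ((x₀ ++ [ABH.hash] ++ y) ∈ D.accepts ↔ n - 1 ∈ ev n {0} y) := by
    intro y hy
    rw [hD]
    constructor
    · rintro (⟨x, y', hx, hy', heq⟩ | ⟨x, y', hxL, hy', heq⟩)
      · have heq' : x₀ ++ ABH.hash :: y = x ++ ABH.hash :: y' := by simpa using heq
        obtain ⟨rfl, rfl⟩ := hash_split hx₀hf hx heq'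
        exact (mem_accepts_iff hn y).1 hy'
      · have heq' : x₀ ++ ABH.hash :: y = x ++ ABH.hash :: y' := by simpa using heq
        obtain ⟨rfl, rfl⟩ := hash_split hx₀hf (hL x hxL) heq'
        exact absurd hxL hx₀L
    · intro h
      exact Or.inl ⟨x₀, y, hx₀hf, (mem_accepts_iff hn y).2 h, rfl⟩
  -- reaching words for every subset
  have hreach : ∀ P : Finset (Fin n), ∃ u : List ABH,
      (∀ c ∈ u, c ≠ ABH.hash) ∧ ev n {0} u = P.image Fin.val := by
    intro P
    exact reach_main hn ((P.image Fin.val).card * n^2 + ∑ q ∈ P.image Fin.val, q)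
      (P.image Fin.val)
      (by intro q hq; obtain ⟨q', _, rfl⟩ := Finset.mem_image.1 hq; exact q'.is_lt)
      le_rfl
  choose uf hu1 hu2 using hreach
  -- the injection
  let f : Finset (Fin n) → Q := fun P => D.evalFrom D.start (x₀ ++ [ABH.hash] ++ uf P)
  have hstep : ∀ (P : Finset (Fin n)) (z : List ABH), (∀ c ∈ z, c ≠ ABH.hash) →
      (D.evalFrom (f P) z ∈ D.accept ↔ n - 1 ∈ ev n (P.image Fin.val) z) := by
    intro P z hz
    have hfz : ∀ c ∈ uf P ++ z, c ≠ ABH.hash := by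
      intro c hc
      rcases List.mem_append.1 hc with h | h
      · exact hu1 P c h
      · exact hz c h
    have h1 := key (uf P ++ z) hfz
    rw [DFA.mem_accepts] at h1
    have h2 : D.eval (x₀ ++ [ABH.hash] ++ (uf P ++ z)) = D.evalFrom (f P) z := by
      show D.evalFrom D.start (x₀ ++ [ABH.hash] ++ (uf P ++ z)) = _
      rw [show x₀ ++ [ABH.hash] ++ (uf P ++ z) = (x₀ ++ [ABH.hash] ++ uf P) ++ z by simp,
        DFA.evalFrom_of_append]
    rw [h2] at h1
    rw [h1, ev_append, hu2 P]
  have hinj : Function.Injective f := by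
    intro P P' hff
    by_contra hPP'
    have hSS' : P.image Fin.val ≠ P'.image Fin.val := by
      intro h
      apply hPP'
      ext q
      constructor
      · intro hq
        have : (q : ℕ) ∈ P'.image Fin.val := h ▸ Finset.mem_image_of_mem _ hq
        obtain ⟨q', hq', hqq⟩ := Finset.mem_image.1 this
        rwa [← Fin.val_injective hqq]
      · intro hq
        have : (q : ℕ) ∈ P.image Fin.val := h ▸ Finset.mem_image_of_mem _ hq
        obtain ⟨q', hq', hqq⟩ := Finset.mem_image.1 this
        rwa [← Fin.val_injective hqq]
    obtain ⟨i, hi⟩ : ∃ i : ℕ, ¬(i ∈ P.image Fin.val ↔ i ∈ P'.image Fin.val) := by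
      by_contra hc
      push_neg at hc
      exact hSS' (Finset.ext fun i => hc i)
    have hilt : i < n := by
      rcases Classical.em (i ∈ P.image Fin.val) with h | h
      · obtain ⟨q', _, rfl⟩ := Finset.mem_image.1 h
        exact q'.is_lt
      · have h' : i ∈ P'.image Fin.val := by tauto
        obtain ⟨q', _, rfl⟩ := Finset.mem_image.1 h'
        exact q'.is_lt
    have e1 := hstep P (distw n i) (distw_nohash n i)
    have e2 := hstep P' (distw n i) (distw_nohash n i)
    rw [mem_ev_distw hn _ hilt] at e1 e2
    rw [hff] at e1
    exact hi (e1.symm.trans e2)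
  calc 2 ^ n = Fintype.card (Finset (Fin n)) := by
        rw [Fintype.card_finset, Fintype.card_fin]
    _ ≤ Fintype.card Q := Fintype.card_le_of_injective f hinj
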